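/- Let m: [0,∞) → (0,∞) be strictly decreasing differentiable with |m′(t)| ≤ (κ/4)m(t), κ > 0, m(0) = m₀ ≤ 1, and set E(t) = ∫₀ᵗ 1/m(s) ds. Then ∫₀ᵗ e^{−2E(s)} e^{κs} ds ≤ (1 + κ) m₀ e^{κt} for all t ≥ 0. -/

import Mathlib

open Real intervalIntegral MeasureTheory Set

private lemma exp_int (c t : ℝ) (hc : c ≠ 0) :
    ∫ s in (0:ℝ)..t, Real.exp (c * s) = (Real.exp (c * t) - 1) / c := by
  have h : ∀ s : ℝ, HasDerivAt (fun x => Real.exp (c * x) / c) (Real.exp (c * s)) s := by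
    intro s
    have := (((hasDerivAt_id s).const_mul c).exp).div_const c
    simpa [hc] using this
  have := intervalIntegral.integral_eq_sub_of_hasDerivAt (f := fun x => Real.exp (c * x) / c)
    (fun s _ => h s) (Continuous.intervalIntegrable (by continuity) 0 t)
  simp only [mul_zero, Real.exp_zero] at this
  rw [this]; ring

/-- Second integral estimate for a slowly decaying mass, with `E(t) = ∫₀ᵗ 1/m(s) ds`. -/
theorem stmt16 (m m' : ℝ → ℝ) (κ : ℝ) (hκ : 0 < κ)
    (hpos : ∀ t ≥ (0 : ℝ), 0 < m t)
    (hanti : StrictAntiOn m (Set.Ici 0))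
    (hderiv : ∀ t ≥ (0 : ℝ), HasDerivAt m (m' t) t)
    (hbound : ∀ t > (0 : ℝ), |m' t| ≤ κ / 4 * m t)
    (hm0 : m 0 ≤ 1)
    (E : ℝ → ℝ) (hE : ∀ t, E t = ∫ s in (0 : ℝ)..t, (m s)⁻¹) :
    ∀ t ≥ (0 : ℝ), ∫ s in (0 : ℝ)..t, Real.exp (-(2 * E s)) * Real.exp (κ * s)
      ≤ (1 + κ) * m 0 * Real.exp (κ * t) := by
  have hm0pos : 0 < m 0 := hpos 0 le_rfl
  -- m continuous on Ici 0
  have hmc : ContinuousOn m (Set.Ici 0) :=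
    fun x hx => (hderiv x hx).continuousAt.continuousWithinAt
  -- inverse continuous on Icc 0 t
  have hinvc : ∀ t : ℝ, ContinuousOn (fun s => (m s)⁻¹) (Set.Icc 0 t) := by
    intro t
    exact ((hmc.mono (Set.Icc_subset_Ici_self)).inv₀
      (fun x hx => (hpos x hx.1).ne'))
  -- E lower bound
  have hElb : ∀ s ≥ (0:ℝ), s / m 0 ≤ E s := by
    intro s hs
    rw [hE s]
    have hint : IntervalIntegrable (fun u => (m u)⁻¹) volume 0 s := by
      exact ContinuousOn.intervalIntegrable (by rw [Set.uIcc_of_le hs]; exact hinvc s)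
    have hconst : IntervalIntegrable (fun _ : ℝ => (m 0)⁻¹) volume 0 s :=
      intervalIntegrable_const
    have hmono : ∀ u ∈ Set.Icc (0:ℝ) s, (m 0)⁻¹ ≤ (m u)⁻¹ := by
      intro u hu
      have hmu : m u ≤ m 0 := (hanti.antitoneOn) Set.self_mem_Ici hu.1 hu.1
      exact inv_anti₀ (hpos u hu.1) hmu
    have := intervalIntegral.integral_mono_on hs hconst hint hmono
    simpa [div_eq_mul_inv, mul_comm] using this
  have hE0 : ∀ s ≥ (0:ℝ), 0 ≤ E s := fun s hs =>
    le_trans (by positivity) (hElb s hs)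
  -- E continuous on Icc 0 t
  have hEc : ∀ t : ℝ, 0 ≤ t → ContinuousOn E (Set.Icc 0 t) := by
    intro t ht
    have h1 : ContinuousOn (fun x => ∫ s in (0:ℝ)..x, (m s)⁻¹) (Set.uIcc 0 t) :=
      intervalIntegral.continuousOn_primitive_interval
        (by rw [Set.uIcc_of_le ht]; exact (hinvc t).integrableOn_Icc)
    rw [Set.uIcc_of_le ht] at h1
    exact h1.congr fun x _ => hE x
  intro t ht
  -- integrand integrable
  have hfc : ContinuousOn (fun s => Real.exp (-(2 * E s)) * Real.exp (κ * s)) (Set.Icc 0 t) := by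
    apply ContinuousOn.mul
    · exact Real.continuous_exp.comp_continuousOn (((hEc t ht).const_smul (2:ℝ)).neg)
    · exact (Real.continuous_exp.comp (continuous_const.mul continuous_id)).continuousOn
  have hfint : IntervalIntegrable (fun s => Real.exp (-(2 * E s)) * Real.exp (κ * s)) volume 0 t := by
    exact ContinuousOn.intervalIntegrable (by rw [Set.uIcc_of_le ht]; exact hfc)
  have hexpt : (1:ℝ) ≤ Real.exp (κ * t) := by
    rw [show (1:ℝ) = Real.exp 0 by simp]
    exact Real.exp_le_exp.mpr (by positivity)
  by_cases hk : 1 < κ * m 0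
  · -- crude bound
    have hle : ∫ s in (0:ℝ)..t, Real.exp (-(2 * E s)) * Real.exp (κ * s)
        ≤ ∫ s in (0:ℝ)..t, Real.exp (κ * s) := by
      apply intervalIntegral.integral_mono_on ht hfint
        (Continuous.intervalIntegrable (by continuity) 0 t)
      intro s hs
      have h1 : Real.exp (-(2 * E s)) ≤ 1 := by
        rw [Real.exp_le_one_iff]
        have := hE0 s hs.1
        linarith
      calc Real.exp (-(2 * E s)) * Real.exp (κ * s) ≤ 1 * Real.exp (κ * s) := by
            apply mul_le_mul_of_nonneg_right h1 (Real.exp_pos _).le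
        _ = Real.exp (κ * s) := one_mul _
    rw [exp_int κ t hκ.ne'] at hle
    have h2 : (Real.exp (κ * t) - 1) / κ ≤ m 0 * Real.exp (κ * t) := by
      rw [div_le_iff₀ hκ]
      nlinarith [Real.exp_pos (κ * t)]
    calc _ ≤ (Real.exp (κ * t) - 1) / κ := hle
      _ ≤ m 0 * Real.exp (κ * t) := h2
      _ ≤ (1 + κ) * m 0 * Real.exp (κ * t) := by nlinarith [Real.exp_pos (κ * t)]
  · -- exponential decay bound
    push_neg at hk
    set a := κ - 2 / m 0 with ha
    have hκle : κ ≤ 1 / m 0 := by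
      rw [le_div_iff₀ hm0pos]; linarith
    have haneg : a ≤ -(1 / m 0) := by
      have : 2 / m 0 = 1 / m 0 + 1 / m 0 := by ring
      rw [ha, this]; linarith
    have haneg' : a < 0 := lt_of_le_of_lt haneg (neg_lt_zero.mpr (by positivity))
    have hle : ∫ s in (0:ℝ)..t, Real.exp (-(2 * E s)) * Real.exp (κ * s)
        ≤ ∫ s in (0:ℝ)..t, Real.exp (a * s) := by
      apply intervalIntegral.integral_mono_on ht hfint
        (Continuous.intervalIntegrable (by continuity) 0 t)
      intro s hs
      rw [← Real.exp_add, Real.exp_le_exp]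
      have h1 : s / m 0 ≤ E s := hElb s hs.1
      have : a * s = κ * s - 2 / m 0 * s := by ring
      rw [this]
      have h2 : 2 / m 0 * s = 2 * (s / m 0) := by ring
      rw [h2]; linarith
    rw [exp_int a t haneg'.ne] at hle
    have h3 : (Real.exp (a * t) - 1) / a ≤ m 0 := by
      rw [div_le_iff_of_neg haneg']
      have key : m 0 * a ≤ -1 := by
        calc m 0 * a ≤ m 0 * (-(1 / m 0)) := mul_le_mul_of_nonneg_left haneg hm0pos.le
          _ = -1 := by field_simp
      linarith [Real.exp_pos (a * t)]
    calc _ ≤ (Real.exp (a * t) - 1) / a := hle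
      _ ≤ m 0 := h3
      _ ≤ (1 + κ) * m 0 * Real.exp (κ * t) := by
          nlinarith [mul_le_mul_of_nonneg_left hexpt hm0pos.le,
            mul_pos hκ (mul_pos hm0pos (Real.exp_pos (κ * t)))]
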